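/- Let θ ∈ ℝ, let φ : (0,∞) → ℝ be a function, and let x ∈ ℝⁿ with ⟨e,x⟩ > 0. Suppose m : [0,∞) → (0,∞) is differentiable with m′(t) = (φ(m(t)) − fθ) m(t) and m(0) = ⟨e,x⟩, and Y : [0,∞) → ℝⁿ is differentiable with Y′(t) = (D+Bᵀ − θE + fθI) Y(t) and Y(0) = x/⟨e,x⟩. Then ⟨e,Y(t)⟩ = 1 for all t ≥ 0, and X := mY satisfies ⟨e,X(t)⟩ = m(t), X′(t) = φ(⟨e,X(t)⟩) X(t) + (D+Bᵀ − θE) X(t) and X(0) = x. Conversely, if X : [0,∞) → ℝⁿ is differentiable with X′(t) = φ(⟨e,X(t)⟩) X(t) + (D+Bᵀ − θE) X(t), X(0) = x and ⟨e,X(t)⟩ > 0 for all t ≥ 0, then m := ⟨e,X⟩ and Y := X/m satisfy the two equations above. -/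

import Mathlib

open Matrix Finset

/-- The diagonal matrix of outflows: `D i i = -∑_{j ≠ i} B i j`. -/
noncomputable def Dmat {n : ℕ} (B : Matrix (Fin n) (Fin n) ℝ) : Matrix (Fin n) (Fin n) ℝ :=
  Matrix.diagonal fun i => -∑ j ∈ Finset.univ.erase i, B i j

/-- The matrix `E = ξ eᵀ`, whose `i`-th row is the all-ones row for `i ∈ F` and zero
otherwise. -/
def Emat {n : ℕ} (F : Finset (Fin n)) : Matrix (Fin n) (Fin n) ℝ :=
  fun i _ => if i ∈ F then 1 else 0

lemma sum_mulVec_A {n : ℕ} (B : Matrix (Fin n) (Fin n) ℝ) (hdiag : ∀ i, B i i = 0)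
    (F : Finset (Fin n)) (θ : ℝ) (v : Fin n → ℝ) :
    ∑ i, ((((Dmat B + B)ᵀ - θ • Emat F)) *ᵥ v) i = -((F.card : ℝ) * θ) * ∑ i, v i := by
  simp only [Matrix.mulVec, dotProduct, Matrix.sub_apply, Matrix.transpose_apply,
    Matrix.add_apply, Matrix.smul_apply, Emat, Dmat, smul_eq_mul]
  rw [Finset.sum_comm]
  rw [Finset.mul_sum]
  refine Finset.sum_congr rfl fun j _ => ?_
  have h1 : ∑ i, (Matrix.diagonal (fun i => -∑ k ∈ Finset.univ.erase i, B i k) j i + B j i)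
      = 0 := by
    rw [Finset.sum_add_distrib]
    rw [Finset.sum_eq_single j (fun i _ hij => Matrix.diagonal_apply_ne _ (Ne.symm hij)) (by simp)]
    rw [Matrix.diagonal_apply_eq]
    rw [← Finset.sum_erase_add Finset.univ _ (Finset.mem_univ j), hdiag]
    ring
  have h2 : ∑ i, (if i ∈ F then (1:ℝ) else 0) = F.card := by
    simp
  rw [← Finset.sum_mul, Finset.sum_sub_distrib, h1, ← Finset.mul_sum, h2]
  ring

lemma full_mulVec {n : ℕ} (B : Matrix (Fin n) (Fin n) ℝ) (F : Finset (Fin n)) (θ : ℝ)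
    (v : Fin n → ℝ) :
    (((Dmat B + B)ᵀ - θ • Emat F + ((F.card : ℝ) * θ) • 1) *ᵥ v)
      = ((Dmat B + B)ᵀ - θ • Emat F) *ᵥ v + ((F.card : ℝ) * θ) • v := by
  rw [Matrix.add_mulVec, Matrix.smul_mulVec, Matrix.one_mulVec]

lemma sum_mulVec_full {n : ℕ} (B : Matrix (Fin n) (Fin n) ℝ) (hdiag : ∀ i, B i i = 0)
    (F : Finset (Fin n)) (θ : ℝ) (v : Fin n → ℝ) :
    ∑ i, ((((Dmat B + B)ᵀ - θ • Emat F + ((F.card : ℝ) * θ) • 1)) *ᵥ v) i = 0 := by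
  rw [full_mulVec]
  simp only [Pi.add_apply, Pi.smul_apply, smul_eq_mul]
  rw [Finset.sum_add_distrib, sum_mulVec_A B hdiag, ← Finset.mul_sum]
  ring

/-- Equivalence between the closed-loop state equation
`X′ = φ(⟨e,X⟩)X + (D+Bᵀ − θE)X`, `X(0) = x`, and the coupled mass/shares system
`m′ = (φ(m) − fθ)m`, `Y′ = (D+Bᵀ − θE + fθI)Y`. -/
theorem stmt8 {n : ℕ} (B : Matrix (Fin n) (Fin n) ℝ)
    (hB : ∀ i j, 0 ≤ B i j) (hdiag : ∀ i, B i i = 0)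
    (F : Finset (Fin n)) (hF : F.Nonempty)
    (θ : ℝ) (φ : ℝ → ℝ) (x : Fin n → ℝ) (hx : 0 < ∑ i, x i) :
    (∀ (m : ℝ → ℝ) (Y : ℝ → Fin n → ℝ),
      (∀ t : ℝ, 0 ≤ t → 0 < m t) →
      (∀ t : ℝ, 0 ≤ t → HasDerivAt m ((φ (m t) - F.card * θ) * m t) t) →
      m 0 = ∑ i, x i →
      (∀ t : ℝ, 0 ≤ t → HasDerivAt Y
        (((Dmat B + B)ᵀ - θ • Emat F + ((F.card : ℝ) * θ) • 1) *ᵥ Y t) t) →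
      Y 0 = (∑ i, x i)⁻¹ • x →
      (∀ t : ℝ, 0 ≤ t → (∑ i, Y t i) = 1) ∧
      (∀ t : ℝ, 0 ≤ t → (∑ i, (m t • Y t) i) = m t) ∧
      (∀ t : ℝ, 0 ≤ t → HasDerivAt (fun s => m s • Y s)
        ((φ (∑ i, (m t • Y t) i)) • (m t • Y t)
          + ((Dmat B + B)ᵀ - θ • Emat F) *ᵥ (m t • Y t)) t) ∧
      m 0 • Y 0 = x) ∧
    (∀ X : ℝ → Fin n → ℝ,
      (∀ t : ℝ, 0 ≤ t → HasDerivAt X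
        ((φ (∑ i, X t i)) • X t + ((Dmat B + B)ᵀ - θ • Emat F) *ᵥ X t) t) →
      X 0 = x →
      (∀ t : ℝ, 0 ≤ t → 0 < ∑ i, X t i) →
      (∀ t : ℝ, 0 ≤ t → HasDerivAt (fun s => ∑ i, X s i)
        ((φ (∑ i, X t i) - F.card * θ) * (∑ i, X t i)) t) ∧
      (∑ i, X 0 i) = ∑ i, x i ∧
      (∀ t : ℝ, 0 ≤ t → HasDerivAt (fun s => (∑ i, X s i)⁻¹ • X s)
        (((Dmat B + B)ᵀ - θ • Emat F + ((F.card : ℝ) * θ) • 1) *ᵥ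
          ((∑ i, X t i)⁻¹ • X t)) t) ∧
      (∑ i, X 0 i)⁻¹ • X 0 = (∑ i, x i)⁻¹ • x) := by
  constructor
  · intro m Y hmpos hm hm0 hY hY0
    -- sum of Y is constant 1
    have hsum1 : ∀ t : ℝ, 0 ≤ t → (∑ i, Y t i) = 1 := by
      intro t ht
      have key : ∀ u : ℝ, 0 ≤ u → HasDerivAt (fun s => ∑ i, Y s i) 0 u := by
        intro u hu
        have h := hY u hu
        have hsum : HasDerivAt (fun s => ∑ i, Y s i)
            (∑ i, ((((Dmat B + B)ᵀ - θ • Emat F + ((F.card : ℝ) * θ) • 1)) *ᵥ Y u) i) u :=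
          HasDerivAt.fun_sum fun i _ => (hasDerivAt_pi.mp h i)
        rwa [sum_mulVec_full B hdiag] at hsum
      have hc := constant_of_has_deriv_right_zero (f := fun s => ∑ i, Y s i) (a := 0) (b := t)
        (fun u hu => ((key u hu.1).continuousAt.continuousWithinAt))
        (fun u hu => ((key u hu.1).hasDerivWithinAt))
      have h2 : (∑ i, Y t i) = ∑ i, Y 0 i := hc t ⟨ht, le_refl t⟩
      rw [h2, hY0]
      simp only [Pi.smul_apply, smul_eq_mul, ← Finset.mul_sum]
      exact inv_mul_cancel₀ hx.ne'
    have hsumm : ∀ t : ℝ, 0 ≤ t → (∑ i, (m t • Y t) i) = m t := by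
      intro t ht
      simp only [Pi.smul_apply, smul_eq_mul, ← Finset.mul_sum, hsum1 t ht, mul_one]
    refine ⟨hsum1, hsumm, ?_, ?_⟩
    · intro t ht
      have hd := (hm t ht).smul (hY t ht)
      rw [hsumm t ht]
      refine hd.congr_deriv ?_
      symm
      rw [full_mulVec, Matrix.mulVec_smul]
      module
    · rw [hm0, hY0, smul_smul, mul_inv_cancel₀ hx.ne', one_smul]
  · intro X hX hX0 hXpos
    have hsd : ∀ t : ℝ, 0 ≤ t → HasDerivAt (fun s => ∑ i, X s i)
        ((φ (∑ i, X t i) - F.card * θ) * (∑ i, X t i)) t := by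
      intro t ht
      have h := hX t ht
      have hsum : HasDerivAt (fun s => ∑ i, X s i)
          (∑ i, ((φ (∑ i, X t i)) • X t + ((Dmat B + B)ᵀ - θ • Emat F) *ᵥ X t) i) t :=
        HasDerivAt.fun_sum fun i _ => (hasDerivAt_pi.mp h i)
      convert hsum using 1
      simp only [Pi.add_apply, Pi.smul_apply, smul_eq_mul]
      rw [Finset.sum_add_distrib, sum_mulVec_A B hdiag, ← Finset.mul_sum]
      ring
    refine ⟨hsd, by rw [hX0], ?_, by rw [hX0]⟩
    intro t ht
    have hne : (∑ i, X t i) ≠ 0 := (hXpos t ht).ne'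
    have hinv : HasDerivAt (fun s => (∑ i, X s i)⁻¹)
        (-((φ (∑ i, X t i) - F.card * θ) * (∑ i, X t i)) / (∑ i, X t i) ^ 2) t :=
      (hsd t ht).inv hne
    have hd := hinv.smul (hX t ht)
    refine hd.congr_deriv ?_
    symm
    rw [full_mulVec, Matrix.mulVec_smul]
    have hscal : -((φ (∑ i, X t i) - F.card * θ) * (∑ i, X t i)) / (∑ i, X t i) ^ 2
        = ((F.card : ℝ) * θ - φ (∑ i, X t i)) * (∑ i, X t i)⁻¹ := by
      field_simp
      ring
    rw [hscal]
    module
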